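/- Projection into the partial-correctness Hoare logic: for any While statement s, state predicate U and setoid trace predicate P, if ⊢{U} s {P} is derivable in the trace-based Hoare logic, then ⊢p {U} s {Last P} is derivable in the state-based partial-correctness Hoare logic. -/
import Mathlib


namespace WhileTrace

/-- Program variables. -/
abbrev Var := ℕ
/-- States assign integer values to variables. -/
abbrev State := Var → ℤ
/-- Arithmetic expressions, modelled by their integer value in each state. -/
abbrev Expr := State → ℤ

/-- State update `σ[x ↦ v]`. -/
def update (σ : State) (x : Var) (v : ℤ) : State := Function.update σ x v

/-- Reading an expression as a boolean: `σ ⊨ e`. -/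
def istrue (e : Expr) (σ : State) : Prop := e σ ≠ 0

/-- Traces: nonempty, possibly infinite sequences of states
(a head state together with a possibly infinite sequence of further states). -/
def Trace : Type := State × Stream'.Seq State

/-- The singleton trace `⟨σ⟩`. -/
def Trace.single (σ : State) : Trace := (σ, Stream'.Seq.nil)

/-- The cons trace `σ :: τ`. -/
def Trace.cons (σ : State) (τ : Trace) : Trace := (σ, Stream'.Seq.cons τ.1 τ.2)

/-- The first state of a trace. -/
def Trace.hd (τ : Trace) : State := τ.1

/-- Bisimilarity of traces `τ ≈ τ'`, as a greatest fixed point: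
there is a relation `R` relating the two traces that is consistent with the
coinductive rules `⟨σ⟩ ≈ ⟨σ⟩` and `σ::τ ≈ σ::τ'` whenever `τ ≈ τ'`. -/
def Bisim (τ τ' : Trace) : Prop :=
  ∃ R : Trace → Trace → Prop, R τ τ' ∧
    ∀ a b, R a b →
      (∃ σ, a = Trace.single σ ∧ b = Trace.single σ) ∨
      (∃ σ a' b', a = Trace.cons σ a' ∧ b = Trace.cons σ b' ∧ R a' b')

/-- Finiteness `τ ↓ σ` : `τ` is finite with last state `σ` (inductive). -/
inductive Converges : Trace → State → Prop
  | single (σ : State) : Converges (Trace.single σ) σ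
  | cons (σ' : State) {τ : Trace} {σ : State} :
      Converges τ σ → Converges (Trace.cons σ' τ) σ

/-- Infiniteness of a trace (coinductive, as a greatest fixed point). -/
def InfiniteT (τ : Trace) : Prop :=
  ∃ P : Trace → Prop, P τ ∧ ∀ a, P a → ∃ σ a', a = Trace.cons σ a' ∧ P a'

/-- Statements of the While language. -/
inductive Stmt : Type
  | assign (x : Var) (e : Expr)
  | skip
  | seq (s₀ s₁ : Stmt)
  | ifte (e : Expr) (st sf : Stmt)
  | whileDo (e : Expr) (st : Stmt)

/-- A pair of relations `(E, ES)` is consistent with the rules of evaluation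
and extended evaluation: every claimed evaluation is backed by one of the
coinductive rules, with premises again in `(E, ES)`. -/
def EvalConsistent (E : Stmt → State → Trace → Prop)
    (ES : Stmt → Trace → Trace → Prop) : Prop :=
  (∀ x e σ τ, E (.assign x e) σ τ →
      τ = Trace.cons σ (Trace.single (update σ x (e σ)))) ∧
  (∀ σ τ, E .skip σ τ → τ = Trace.single σ) ∧
  (∀ s₀ s₁ σ τ', E (.seq s₀ s₁) σ τ' → ∃ τ, E s₀ σ τ ∧ ES s₁ τ τ') ∧
  (∀ e st sf σ τ, E (.ifte e st sf) σ τ →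
      (istrue e σ ∧ ES st (Trace.cons σ (Trace.single σ)) τ) ∨
      (¬ istrue e σ ∧ ES sf (Trace.cons σ (Trace.single σ)) τ)) ∧
  (∀ e st σ τ', E (.whileDo e st) σ τ' →
      (istrue e σ ∧ ∃ τ, ES st (Trace.cons σ (Trace.single σ)) τ ∧
        ES (.whileDo e st) τ τ') ∨
      (¬ istrue e σ ∧ τ' = Trace.cons σ (Trace.single σ))) ∧
  (∀ s τ τ', ES s τ τ' →
      (∃ σ, τ = Trace.single σ ∧ E s σ τ') ∨
      (∃ σ τ₀ τ₀', τ = Trace.cons σ τ₀ ∧ τ' = Trace.cons σ τ₀' ∧ ES s τ₀ τ₀'))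

/-- Evaluation `(s,σ) ⇒ τ` : greatest fixed point of the mutual coinductive rules. -/
def Exec (s : Stmt) (σ : State) (τ : Trace) : Prop :=
  ∃ E ES, EvalConsistent E ES ∧ E s σ τ

/-- Extended evaluation `(s,τ) ⇒* τ'`. -/
def ExecSeq (s : Stmt) (τ τ' : Trace) : Prop :=
  ∃ E ES, EvalConsistent E ES ∧ ES s τ τ'

/-- The standard inductive state-based big-step semantics `(s,σ) ⇓ σ'`. -/
inductive BigStep : Stmt → State → State → Prop
  | assign (x : Var) (e : Expr) (σ : State) :
      BigStep (.assign x e) σ (update σ x (e σ))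
  | skip (σ : State) : BigStep .skip σ σ
  | seq {s₀ s₁ : Stmt} {σ σ' σ'' : State} :
      BigStep s₀ σ σ' → BigStep s₁ σ' σ'' → BigStep (.seq s₀ s₁) σ σ''
  | ifTrue {e : Expr} {st sf : Stmt} {σ σ' : State} :
      istrue e σ → BigStep st σ σ' → BigStep (.ifte e st sf) σ σ'
  | ifFalse {e : Expr} {st sf : Stmt} {σ σ' : State} :
      ¬ istrue e σ → BigStep sf σ σ' → BigStep (.ifte e st sf) σ σ'
  | whileTrue {e : Expr} {st : Stmt} {σ σ' σ'' : State} :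
      istrue e σ → BigStep st σ σ' → BigStep (.whileDo e st) σ' σ'' →
      BigStep (.whileDo e st) σ σ''
  | whileFalse {e : Expr} {st : Stmt} {σ : State} :
      ¬ istrue e σ → BigStep (.whileDo e st) σ σ

/-- State predicates. -/
abbrev StatePred := State → Prop
/-- Trace predicates. -/
abbrev TracePred := Trace → Prop

/-- A setoid trace predicate respects bisimilarity. -/
def IsSetoidPred (P : TracePred) : Prop := ∀ τ τ', P τ → Bisim τ τ' → P τ'

/-- The singleton predicate `[U]`. -/
def Sglt (U : StatePred) : TracePred :=
  fun τ => ∃ σ, U σ ∧ τ = Trace.single σ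

/-- The doubleton predicate `⟨U⟩`. -/
def Dup (U : StatePred) : TracePred :=
  fun τ => ∃ σ, U σ ∧ τ = Trace.cons σ (Trace.single σ)

/-- The update predicate `U[x ↦ e]`. -/
def UpdPred (U : StatePred) (x : Var) (e : Expr) : TracePred :=
  fun τ => ∃ σ, U σ ∧ τ = Trace.cons σ (Trace.single (update σ x (e σ)))

/-- `Q follows τ in τ'` (coinductive, as a greatest fixed point). -/
def Follows (Q : TracePred) (τ τ' : Trace) : Prop :=
  ∃ R : Trace → Trace → Prop, R τ τ' ∧
    ∀ a b, R a b →
      (∃ σ, a = Trace.single σ ∧ b.hd = σ ∧ Q b) ∨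
      (∃ σ a' b', a = Trace.cons σ a' ∧ b = Trace.cons σ b' ∧ R a' b')

/-- The chop `P ** Q`. -/
def Chop (P Q : TracePred) : TracePred :=
  fun τ' => ∃ τ, P τ ∧ Follows Q τ τ'

/-- The iteration `P*` (coinductive, as a greatest fixed point). -/
def Iter (P : TracePred) : TracePred := fun τ =>
  ∃ X : TracePred, X τ ∧
    ∀ a, X a → Sglt (fun _ => True) a ∨ ∃ τ₀, P τ₀ ∧ Follows X τ₀ a

/-- `Last P` : states that are the last state of some finite trace satisfying `P`. -/
def Last (P : TracePred) : StatePred := fun σ => ∃ τ, P τ ∧ Converges τ σ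

/-- The trace predicate `finite`. -/
def FiniteT : TracePred := fun τ => ∃ σ, Converges τ σ

/-- Derivability `⊢ {U} s {P}` in the trace-based Hoare logic. -/
inductive THoare : StatePred → Stmt → TracePred → Prop
  | assign (U : StatePred) (x : Var) (e : Expr) :
      THoare U (.assign x e) (UpdPred U x e)
  | skip (U : StatePred) : THoare U .skip (Sglt U)
  | seq {U V : StatePred} {s₀ s₁ : Stmt} {P Q : TracePred} :
      THoare U s₀ (Chop P (Sglt V)) → THoare V s₁ Q →
      THoare U (.seq s₀ s₁) (Chop P Q)
  | ifte {U : StatePred} {e : Expr} {st sf : Stmt} {P : TracePred} :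
      THoare (fun σ => istrue e σ ∧ U σ) st P →
      THoare (fun σ => ¬ istrue e σ ∧ U σ) sf P →
      THoare U (.ifte e st sf) (Chop (Dup U) P)
  | whileDo {U I : StatePred} {e : Expr} {st : Stmt} {P : TracePred} :
      (∀ σ, U σ → I σ) →
      THoare (fun σ => istrue e σ ∧ I σ) st (Chop P (Sglt I)) →
      THoare U (.whileDo e st)
        (Chop (Dup U)
          (Chop (Iter (Chop P (Dup I))) (Sglt (fun σ => ¬ istrue e σ))))
  | conseq {U U' : StatePred} {s : Stmt} {P P' : TracePred} :
      (∀ σ, U σ → U' σ) → THoare U' s P' → (∀ τ, P' τ → P τ) →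
      THoare U s P
  | exist {Z : Type} {U : Z → StatePred} {s : Stmt} {P : Z → TracePred} :
      (∀ z, THoare (U z) s (P z)) →
      THoare (fun σ => ∃ z, U z σ) s (fun τ => ∃ z, P z τ)

/-- Derivability `⊢p {U} s {Z}` in the state-based partial-correctness Hoare logic. -/
inductive PHoare : StatePred → Stmt → StatePred → Prop
  | assign (Z : StatePred) (x : Var) (e : Expr) :
      PHoare (fun σ => Z (update σ x (e σ))) (.assign x e) Z
  | skip (U : StatePred) : PHoare U .skip U
  | seq {U V Z : StatePred} {s₀ s₁ : Stmt} :
      PHoare U s₀ V → PHoare V s₁ Z → PHoare U (.seq s₀ s₁) Z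
  | ifte {U Z : StatePred} {e : Expr} {st sf : Stmt} :
      PHoare (fun σ => istrue e σ ∧ U σ) st Z →
      PHoare (fun σ => ¬ istrue e σ ∧ U σ) sf Z →
      PHoare U (.ifte e st sf) Z
  | whileDo {I : StatePred} {e : Expr} {st : Stmt} :
      PHoare (fun σ => istrue e σ ∧ I σ) st I →
      PHoare I (.whileDo e st) (fun σ => I σ ∧ ¬ istrue e σ)
  | exist {Z : Type} {U V : Z → StatePred} {s : Stmt} :
      (∀ z, PHoare (U z) s (V z)) →
      PHoare (fun σ => ∃ z, U z σ) s (fun σ => ∃ z, V z σ)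
  | conseq {U U' Z Z' : StatePred} {s : Stmt} :
      (∀ σ, U σ → U' σ) → PHoare U' s Z' → (∀ σ, Z' σ → Z σ) →
      PHoare U s Z

/-- Derivability `⊢t {U} s {Z}` in the state-based total-correctness Hoare
logic, with the `while-fun` rule. -/
inductive TotHoare : StatePred → Stmt → StatePred → Prop
  | assign (Z : StatePred) (x : Var) (e : Expr) :
      TotHoare (fun σ => Z (update σ x (e σ))) (.assign x e) Z
  | skip (U : StatePred) : TotHoare U .skip U
  | seq {U V Z : StatePred} {s₀ s₁ : Stmt} :
      TotHoare U s₀ V → TotHoare V s₁ Z → TotHoare U (.seq s₀ s₁) Z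
  | ifte {U Z : StatePred} {e : Expr} {st sf : Stmt} :
      TotHoare (fun σ => istrue e σ ∧ U σ) st Z →
      TotHoare (fun σ => ¬ istrue e σ ∧ U σ) sf Z →
      TotHoare U (.ifte e st sf) Z
  | whileFun {I : StatePred} {e : Expr} {st : Stmt} (t : State → ℕ) (m : ℕ) :
      (∀ n : ℕ, TotHoare (fun σ => istrue e σ ∧ I σ ∧ t σ = n) st
        (fun σ => I σ ∧ t σ < n)) →
      TotHoare (fun σ => I σ ∧ t σ = m) (.whileDo e st)
        (fun σ => I σ ∧ t σ ≤ m ∧ ¬ istrue e σ)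
  | exist {Z : Type} {U V : Z → StatePred} {s : Stmt} :
      (∀ z, TotHoare (U z) s (V z)) →
      TotHoare (fun σ => ∃ z, U z σ) s (fun σ => ∃ z, V z σ)
  | conseq {U U' Z Z' : StatePred} {s : Stmt} :
      (∀ σ, U σ → U' σ) → TotHoare U' s Z' → (∀ σ, Z' σ → Z σ) →
      TotHoare U s Z

/-! ### Auxiliary lemmas -/

lemma trace_cons_ne_single (σ σ' : State) (τ : Trace) :
    Trace.cons σ τ ≠ Trace.single σ' := by
  intro h
  have h2 : (Trace.cons σ τ).2 = (Trace.single σ').2 := by rw [h]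
  have := congrArg Stream'.Seq.head h2
  simp [Trace.cons, Trace.single, Stream'.Seq.head_cons, Stream'.Seq.head_nil] at this

lemma trace_single_inj {σ σ' : State} (h : Trace.single σ = Trace.single σ') : σ = σ' :=
  congrArg Prod.fst h

lemma trace_cons_inj {σ σ' : State} {τ τ' : Trace}
    (h : Trace.cons σ τ = Trace.cons σ' τ') : σ = σ' ∧ τ = τ' := by
  have h1 : σ = σ' := congrArg Prod.fst h
  have h2 : Stream'.Seq.cons τ.1 τ.2 = Stream'.Seq.cons τ'.1 τ'.2 := congrArg Prod.snd h
  have hh := congrArg Stream'.Seq.head h2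
  have ht := congrArg Stream'.Seq.tail h2
  simp [Stream'.Seq.head_cons] at hh
  simp [Stream'.Seq.tail_cons] at ht
  exact ⟨h1, Prod.ext hh ht⟩

lemma hd_single (σ : State) : (Trace.single σ).hd = σ := rfl
lemma hd_cons (σ : State) (τ : Trace) : (Trace.cons σ τ).hd = σ := rfl

lemma conv_cases {τ : Trace} {σf : State} (h : Converges τ σf) :
    (τ = Trace.single σf) ∨ (∃ σ' τ₀, τ = Trace.cons σ' τ₀ ∧ Converges τ₀ σf) := by
  cases h with
  | single σ => exact Or.inl rfl
  | cons σ' h' => exact Or.inr ⟨σ', _, rfl, h'⟩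

lemma conv_single_inv {σ σf : State} (h : Converges (Trace.single σ) σf) : σf = σ := by
  rcases conv_cases h with h1 | ⟨σ', τ₀, h1, _⟩
  · exact (trace_single_inj h1).symm
  · exact absurd h1.symm (trace_cons_ne_single _ _ _)

lemma conv_cons_inv {σ : State} {τ : Trace} {σf : State}
    (h : Converges (Trace.cons σ τ) σf) : Converges τ σf := by
  rcases conv_cases h with h1 | ⟨σ', τ₀, h1, h2⟩
  · exact absurd h1 (trace_cons_ne_single _ _ _)
  · rcases trace_cons_inj h1 with ⟨_, h3⟩
    exact h3 ▸ h2

lemma follows_mono {Q Q' : TracePred} (hQ : ∀ x, Q x → Q' x) {a b : Trace}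
    (h : Follows Q a b) : Follows Q' a b := by
  obtain ⟨R, hR, hc⟩ := h
  refine ⟨R, hR, fun x y hxy => ?_⟩
  rcases hc x y hxy with ⟨σ, h1, h2, h3⟩ | h'
  · exact Or.inl ⟨σ, h1, h2, hQ _ h3⟩
  · exact Or.inr h'

lemma follows_single {Q : TracePred} {σ : State} {b : Trace}
    (hhd : b.hd = σ) (hQ : Q b) : Follows Q (Trace.single σ) b :=
  ⟨fun x y => x = Trace.single σ ∧ y = b, ⟨rfl, rfl⟩,
    fun x y ⟨hx, hy⟩ => Or.inl ⟨σ, hx, hy ▸ hhd, hy ▸ hQ⟩⟩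

lemma follows_cons {Q : TracePred} {σ : State} {a b : Trace}
    (h : Follows Q a b) : Follows Q (Trace.cons σ a) (Trace.cons σ b) := by
  obtain ⟨R, hR, hc⟩ := h
  refine ⟨fun x y => (x = Trace.cons σ a ∧ y = Trace.cons σ b) ∨ R x y,
    Or.inl ⟨rfl, rfl⟩, fun x y hxy => ?_⟩
  rcases hxy with ⟨hx, hy⟩ | hxy
  · exact Or.inr ⟨σ, a, b, hx, hy, Or.inr hR⟩
  · rcases hc x y hxy with ⟨σ', h1, h2, h3⟩ | ⟨σ', a', b', h1, h2, h3⟩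
    · exact Or.inl ⟨σ', h1, h2, h3⟩
    · exact Or.inr ⟨σ', a', b', h1, h2, Or.inr h3⟩

/-- Appending: a trace `τq` satisfying `Q` can be appended after a finite trace `τ`. -/
lemma followsAppend {τ : Trace} {σ₁ : State} (h : Converges τ σ₁)
    (Q : TracePred) (τq : Trace) (hQ : Q τq) (hhd : τq.hd = σ₁) :
    ∃ τ', Follows Q τ τ' ∧ τ'.hd = τ.hd ∧ ∀ σf, Converges τq σf → Converges τ' σf := by
  induction h with
  | single σ =>
    exact ⟨τq, follows_single hhd hQ, hhd, fun σf hf => hf⟩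
  | cons σ' h ih =>
    obtain ⟨τ₀', h1, h2, h3⟩ := ih hhd
    exact ⟨Trace.cons σ' τ₀', follows_cons h1, rfl, fun σf hf => Converges.cons σ' (h3 σf hf)⟩

/-- Decomposing a finite trace along a `Follows`. -/
lemma followsConverges {Q : TracePred} {τ τ' : Trace} {σf : State}
    (hf : Follows Q τ τ') (hc : Converges τ' σf) :
    ∃ σ₁ τq, Converges τ σ₁ ∧ Q τq ∧ τq.hd = σ₁ ∧ Converges τq σf := by
  induction hc generalizing τ with
  | single σ =>
    obtain ⟨R, hR, hcons⟩ := hf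
    rcases hcons _ _ hR with ⟨σ₁, h1, h2, h3⟩ | ⟨σ', a', b', h1, h2, _⟩
    · refine ⟨σ₁, _, ?_, h3, h2, Converges.single σ⟩
      rw [h1]; exact Converges.single σ₁
    · exact absurd h2.symm (trace_cons_ne_single _ _ _)
  | cons σ' hc' ih =>
    rename_i τ₂' _
    obtain ⟨R, hR, hcons⟩ := hf
    rcases hcons _ _ hR with ⟨σ₁, h1, h2, h3⟩ | ⟨σ'', a', b', h1, h2, h3⟩
    · refine ⟨σ₁, _, ?_, h3, h2, Converges.cons σ' hc'⟩
      rw [h1]; exact Converges.single σ₁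
    · rcases trace_cons_inj h2 with ⟨hσ, hb⟩
      obtain ⟨σ₁, τq, g1, g2, g3, g4⟩ := ih (τ := a') ⟨R, hb ▸ h3, hcons⟩
      refine ⟨σ₁, τq, ?_, g2, g3, g4⟩
      rw [h1]; exact Converges.cons σ'' g1

lemma iter_unfold {Pc : TracePred} {a : Trace} (h : Iter Pc a) :
    Sglt (fun _ => True) a ∨ ∃ τ₀, Pc τ₀ ∧ Follows (Iter Pc) τ₀ a := by
  obtain ⟨X, hX, hc⟩ := h
  rcases hc a hX with h1 | ⟨τ₀, h1, h2⟩
  · exact Or.inl h1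
  · exact Or.inr ⟨τ₀, h1, follows_mono (fun x hx => ⟨X, hx, hc⟩) h2⟩

lemma iter_single (Pc : TracePred) (σ : State) : Iter Pc (Trace.single σ) :=
  ⟨Sglt (fun _ => True), ⟨σ, trivial, rfl⟩, fun _ ha => Or.inl ha⟩

lemma iter_step {Pc : TracePred} {τ₀ τ : Trace} (hp : Pc τ₀)
    (hf : Follows (Iter Pc) τ₀ τ) : Iter Pc τ := by
  refine ⟨fun a => Iter Pc a ∨ a = τ, Or.inr rfl, fun a ha => ?_⟩
  rcases ha with ha | rfl
  · rcases iter_unfold ha with h1 | ⟨τ₁, h1, h2⟩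
    · exact Or.inl h1
    · exact Or.inr ⟨τ₁, h1, follows_mono (fun x hx => Or.inl hx) h2⟩
  · exact Or.inr ⟨τ₀, hp, follows_mono (fun x hx => Or.inl hx) hf⟩

lemma pHoare_false (s : Stmt) (Z : StatePred) : PHoare (fun _ => False) s Z := by
  have h := PHoare.exist (Z := Empty) (U := fun z => Empty.elim z) (V := fun z => Empty.elim z)
    (s := s) (fun z => z.elim)
  exact PHoare.conseq (fun σ hσ => hσ.elim) h (fun σ hσ => (hσ.choose).elim)

/-- `LastH P ρ` : last states of finite `P`-traces whose head is `ρ`. -/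
def LastH (P : TracePred) (ρ : State) : StatePred :=
  fun σ => ∃ τ, P τ ∧ τ.hd = ρ ∧ Converges τ σ

/-- Last state of a chop with a singleton. -/
lemma lastH_chop_sglt {P : TracePred} {V : StatePred} {ρ σ : State}
    (h : LastH (Chop P (Sglt V)) ρ σ) :
    V σ ∧ ∃ τp, P τp ∧ τp.hd = ρ ∧ Converges τp σ := by
  obtain ⟨τ, ⟨τp, hp, hfol⟩, hhd, hconv⟩ := h
  obtain ⟨σ₁, τq, g1, g2, g3, g4⟩ := followsConverges hfol hconv
  obtain ⟨σ₂, hV, rfl⟩ := g2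
  have e1 : σ₂ = σ₁ := g3
  have e2 : σ = σ₂ := conv_single_inv g4
  -- head of τp equals head of τ
  have hhd' : τp.hd = ρ := by
    obtain ⟨R, hR, hcons⟩ := hfol
    rcases hcons _ _ hR with ⟨σ', h1, h2, _⟩ | ⟨σ', a', b', h1, h2, _⟩
    · rw [h1, hd_single, ← h2, hhd]
    · rw [h1, hd_cons, ← hhd, h2, hd_cons]
    
  subst e2
  exact ⟨hV, τp, hp, hhd', e1 ▸ g1⟩

/-- The strengthened projection statement. -/
lemma tHoare_project_strong {U : StatePred} {s : Stmt} {P : TracePred}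
    (h : THoare U s P) :
    ∀ ρ, U ρ → PHoare (fun σ => U σ ∧ σ = ρ) s (LastH P ρ) := by
  induction h with
  | assign U x e =>
    intro ρ hU
    refine PHoare.conseq (U' := fun σ => LastH (UpdPred U x e) ρ (update σ x (e σ)))
      ?_ (PHoare.assign _ x e) (fun σ hσ => hσ)
    rintro σ ⟨hUσ, rfl⟩
    exact ⟨Trace.cons σ (Trace.single (update σ x (e σ))), ⟨σ, hUσ, rfl⟩, rfl,
      Converges.cons σ (Converges.single _)⟩
  | skip U =>
    intro ρ hU
    refine PHoare.conseq ?_ (PHoare.skip (LastH (Sglt U) ρ)) (fun σ hσ => hσ)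
    rintro σ ⟨hUσ, rfl⟩
    exact ⟨Trace.single σ, ⟨σ, hUσ, rfl⟩, rfl, Converges.single σ⟩
  | seq h0 h1 ih0 ih1 =>
    rename_i U V s₀ s₁ P Q
    intro ρ hU
    refine PHoare.seq (ih0 ρ hU) ?_
    -- from mid predicate `LastH (Chop P (Sglt V)) ρ` run s₁
    have key : ∀ z : {ρ' : State // LastH (Chop P (Sglt V)) ρ ρ'},
        PHoare (fun σ => LastH (Chop P (Sglt V)) ρ σ ∧ σ = z.1) s₁
          (fun σ => LastH (Chop P Q) ρ σ) := by
      intro z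
      obtain ⟨hV, τp, hp, hhd, hconv⟩ := lastH_chop_sglt z.2
      refine PHoare.conseq ?_ (ih1 z.1 hV) ?_
      · rintro σ ⟨_, rfl⟩; exact ⟨hV, rfl⟩
      · rintro σ ⟨τq, hq, hqhd, hqconv⟩
        obtain ⟨τ', f1, f2, f3⟩ := followsAppend hconv Q τq hq hqhd
        exact ⟨τ', ⟨τp, hp, f1⟩, f2.trans hhd, f3 σ hqconv⟩
    refine PHoare.conseq ?_ (PHoare.exist key) ?_
    · exact fun σ hσ => ⟨⟨σ, hσ⟩, hσ, rfl⟩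
    · rintro σ ⟨z, hz⟩; exact hz
  | ifte ht hf iht ihf =>
    rename_i U e st sf P
    intro ρ hU
    have hpost : ∀ σ, LastH P ρ σ → LastH (Chop (Dup U) P) ρ σ := by
      rintro σ ⟨τp, hp, hhd, hconv⟩
      refine ⟨Trace.cons ρ τp, ⟨Trace.cons ρ (Trace.single ρ), ⟨ρ, hU, rfl⟩,
        follows_cons (follows_single hhd hp)⟩, rfl, Converges.cons ρ hconv⟩
    refine PHoare.ifte ?_ ?_
    · by_cases he : istrue e ρ
      · refine PHoare.conseq ?_ (iht ρ ⟨he, hU⟩) hpost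
        rintro σ ⟨heσ, hUσ, rfl⟩; exact ⟨⟨heσ, hUσ⟩, rfl⟩
      · refine PHoare.conseq ?_ (pHoare_false st (fun _ => False)) (fun σ hσ => hσ.elim)
        rintro σ ⟨heσ, _, rfl⟩; exact he heσ
    · by_cases he : istrue e ρ
      · refine PHoare.conseq ?_ (pHoare_false sf (fun _ => False)) (fun σ hσ => hσ.elim)
        rintro σ ⟨heσ, _, rfl⟩; exact heσ he
      · refine PHoare.conseq ?_ (ihf ρ ⟨he, hU⟩) hpost
        rintro σ ⟨heσ, hUσ, rfl⟩; exact ⟨⟨heσ, hUσ⟩, rfl⟩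
  | whileDo hUI hbody ihbody =>
    rename_i U I e st P
    intro ρ hU
    set Pc : TracePred := Chop P (Dup I) with hPc
    set K : StatePred := fun σ => ∀ τt, Iter Pc τt → τt.hd = σ →
      ∀ σf, Converges τt σf →
        ∃ τ', Iter Pc τ' ∧ τ'.hd = ρ ∧ Converges τ' σf with hK
    set J : StatePred := fun σ => I σ ∧ K σ with hJ
    have hbodyJ : PHoare (fun σ => istrue e σ ∧ J σ) st J := by
      have key : ∀ z : {ρ' : State // istrue e ρ' ∧ J ρ'},
          PHoare (fun σ => (istrue e σ ∧ J σ) ∧ σ = z.1) st (fun σ => J σ) := by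
        intro z
        obtain ⟨he', hI', hK'⟩ := z.2
        refine PHoare.conseq ?_ (ihbody z.1 ⟨he', hI'⟩) ?_
        · rintro σ ⟨⟨heσ, hIσ, _⟩, rfl⟩; exact ⟨⟨heσ, hIσ⟩, rfl⟩
        · -- post: LastH (Chop P (Sglt I)) z.1 σ → J σ
          intro σ hσ
          obtain ⟨hIσ, τp, hp, hhd, hconv⟩ := lastH_chop_sglt hσ
          -- build the Pc segment from z.1 to σ
          obtain ⟨τseg, f1, f2, f3⟩ := followsAppend hconv (Dup I)
            (Trace.cons σ (Trace.single σ)) ⟨σ, hIσ, rfl⟩ rfl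
          have hseg : Pc τseg := ⟨τp, hp, f1⟩
          have hseghd : τseg.hd = z.1 := f2.trans hhd
          have hsegconv : Converges τseg σ := f3 σ (Converges.cons σ (Converges.single σ))
          refine ⟨hIσ, ?_⟩
          intro τt hiter hthd σf hconvf
          obtain ⟨τnew, g1, g2, g3⟩ := followsAppend hsegconv (Iter Pc) τt hiter hthd
          exact hK' τnew (iter_step hseg g1) (g2.trans hseghd) σf (g3 σf hconvf)
      refine PHoare.conseq ?_ (PHoare.exist key) ?_
      · exact fun σ hσ => ⟨⟨σ, hσ⟩, hσ, rfl⟩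
      · rintro σ ⟨z, hz⟩; exact hz
    refine PHoare.conseq ?_ (PHoare.whileDo (I := J) hbodyJ) ?_
    · rintro σ ⟨hUσ, rfl⟩
      refine ⟨hUI σ hUσ, ?_⟩
      intro τt hiter hthd σf hconvf
      exact ⟨τt, hiter, hthd, hconvf⟩
    · rintro σ ⟨⟨hIσ, hKσ⟩, heσ⟩
      obtain ⟨τit, g1, g2, g3⟩ := hKσ (Trace.single σ) (iter_single Pc σ) rfl σ
        (Converges.single σ)
      obtain ⟨τ₂, f1, f2, f3⟩ := followsAppend g3 (Sglt (fun σ' => ¬ istrue e σ'))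
        (Trace.single σ) ⟨σ, heσ, rfl⟩ rfl
      have hchop : Chop (Iter Pc) (Sglt (fun σ' => ¬ istrue e σ')) τ₂ := ⟨τit, g1, f1⟩
      refine ⟨Trace.cons ρ τ₂, ⟨Trace.cons ρ (Trace.single ρ), ⟨ρ, hU, rfl⟩,
        follows_cons (follows_single (f2.trans g2) hchop)⟩, rfl,
        Converges.cons ρ (f3 σ (Converges.single σ))⟩
  | conseq hUU' h' hPP' ih =>
    intro ρ hU
    refine PHoare.conseq ?_ (ih ρ (hUU' ρ hU)) ?_
    · rintro σ ⟨hUσ, rfl⟩; exact ⟨hUU' σ hUσ, rfl⟩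
    · rintro σ ⟨τ, hτ, hhd, hconv⟩; exact ⟨τ, hPP' τ hτ, hhd, hconv⟩
  | exist h' ih =>
    rename_i Z U s P
    intro ρ hU
    refine PHoare.conseq (U' := fun σ => ∃ w : {z : Z // U z ρ}, (U w.1 σ ∧ σ = ρ)) ?_
      (PHoare.exist (fun w => ih w.1 ρ w.2)) ?_
    · rintro σ ⟨⟨z, hz⟩, rfl⟩; exact ⟨⟨z, hz⟩, hz, rfl⟩
    · rintro σ ⟨w, τ, hτ, hhd, hconv⟩
      exact ⟨τ, ⟨w.1, hτ⟩, hhd, hconv⟩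

/-- Projection into the partial-correctness Hoare logic. -/
theorem tHoare_project (s : Stmt) (U : StatePred) (P : TracePred)
    (hP : IsSetoidPred P) (h : THoare U s P) : PHoare U s (Last P) := by
  refine PHoare.conseq (U' := fun σ => ∃ z : {ρ : State // U ρ}, (U σ ∧ σ = z.1)) ?_
    (PHoare.exist (fun z => tHoare_project_strong h z.1 z.2)) ?_
  · exact fun σ hσ => ⟨⟨σ, hσ⟩, hσ, rfl⟩
  · rintro σ ⟨z, τ, hτ, _, hconv⟩
    exact ⟨τ, hτ, hconv⟩

end WhileTrace
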